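/- For θ > 1 and each k ≥ 2, the supremum defining φ_θ(k) is attained at a vector with at most two distinct nonzero values: there exist k₁, k₂ ≥ 0 with k₁ + k₂ ≤ k and x, y ≥ 0 with k₁x + k₂y = 1 such that the vector with k₁ coordinates equal to x, k₂ coordinates equal to y, and the rest zero achieves φ_θ(k). -/

import Mathlib

open Finset Set


/-- `φ_θ(k) = sup { ∑_{i ≠ j} |v i|^θ |v j|^θ : v ∈ ℝ^k, ‖v‖₁ = 1 }`. -/
noncomputable def phiVar (θ : ℝ) (k : ℕ) : ℝ :=
  ⨆ v : {v : Fin k → ℝ // ∑ i, |v i| = 1},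
    ∑ i : Fin k, ∑ j : Fin k, if i ≠ j then |v.1 i| ^ θ * |v.1 j| ^ θ else 0

/-- For `θ > 1` and `k ≥ 2`, the supremum defining `φ_θ(k)` is attained at a vector
taking at most two distinct nonzero values: `k₁` coordinates equal to `x`, `k₂`
coordinates equal to `y`, and the remaining coordinates zero. -/
lemma pair_sum {k : ℕ} (a : Fin k → ℝ) :
    ∑ i, ∑ j, (if i ≠ j then a i * a j else 0)
      = (∑ i, a i)^2 - ∑ i, (a i)^2 := by
  have h : ∀ i : Fin k, ∑ j, (if i ≠ j then a i * a j else 0)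
      = (∑ j, a i * a j) - a i * a i := by
    intro i
    have : ∀ j : Fin k, (if i ≠ j then a i * a j else 0)
        = a i * a j - (if i = j then a i * a j else 0) := by
      intro j; by_cases h : i = j <;> simp [h]
    rw [Finset.sum_congr rfl fun j _ => this j, Finset.sum_sub_distrib,
      Finset.sum_ite_eq univ i (fun j => a i * a j)]
    simp
  rw [Finset.sum_congr rfl fun i _ => h i, Finset.sum_sub_distrib, sq,
    Finset.sum_mul_sum]
  simp [sq]

lemma F_eq {k : ℕ} (θ : ℝ) (v : Fin k → ℝ) :
    ∑ i, ∑ j, (if i ≠ j then |v i| ^ θ * |v j| ^ θ else 0)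
      = (∑ i, |v i| ^ θ)^2 - ∑ i, |v i| ^ (θ*2) := by
  rw [pair_sum (fun i => |v i| ^ θ)]
  congr 1
  refine Finset.sum_congr rfl fun i _ => ?_
  rw [← Real.rpow_natCast (|v i| ^ θ) 2, ← Real.rpow_mul (abs_nonneg _)]
  norm_num

lemma sum_update_two {k : ℕ} (t : Fin k → ℝ) (i j : Fin k) (hij : i ≠ j)
    (a b : ℝ) (f : ℝ → ℝ) :
    ∑ l, f (Function.update (Function.update t i a) j b l)
      = f a + f b + ((∑ l, f (t l)) - f (t i) - f (t j)) := by
  classical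
  have e1 : (fun l => f (Function.update (Function.update t i a) j b l))
      = Function.update (fun l => f (Function.update t i a l)) j (f b) := by
    funext l; by_cases h : l = j
    · subst h; simp
    · simp [Function.update_of_ne h]
  have e2 : (fun l => f (Function.update t i a l))
      = Function.update (fun l => f (t l)) i (f a) := by
    funext l; by_cases h : l = i
    · subst h; simp
    · simp [Function.update_of_ne h]
  rw [e1, Finset.sum_update_of_mem (Finset.mem_univ j), e2]
  rw [Finset.sdiff_singleton_eq_erase,
    Finset.sum_update_of_mem (Finset.mem_erase.mpr ⟨hij, Finset.mem_univ i⟩)]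
  rw [Finset.sdiff_singleton_eq_erase,
    Finset.sum_erase_eq_sub (Finset.mem_erase.mpr ⟨hij, Finset.mem_univ i⟩),
    Finset.sum_erase_eq_sub (Finset.mem_univ j)]
  ring


lemma continuous_abs_rpow (θ : ℝ) (hθ : 0 < θ) : Continuous (fun x : ℝ => |x| ^ θ) := by
  refine continuous_iff_continuousAt.mpr fun x => ?_
  exact (Real.continuousAt_rpow_const _ _ (Or.inr hθ.le)).comp continuous_abs.continuousAt

lemma exists_max (θ : ℝ) (hθ : 0 < θ) (k : ℕ) (hk : 0 < k) :
    ∃ v : Fin k → ℝ, (∑ i, |v i| = 1) ∧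
      (∀ w : Fin k → ℝ, (∑ i, |w i| = 1) →
        (∑ i, ∑ j, (if i ≠ j then |w i| ^ θ * |w j| ^ θ else 0))
          ≤ ∑ i, ∑ j, (if i ≠ j then |v i| ^ θ * |v j| ^ θ else 0)) ∧
      (∑ i, ∑ j, (if i ≠ j then |v i| ^ θ * |v j| ^ θ else 0)) = phiVar θ k := by
  classical
  set F : (Fin k → ℝ) → ℝ :=
    fun v => ∑ i, ∑ j, (if i ≠ j then |v i| ^ θ * |v j| ^ θ else 0) with hF
  set S : Set (Fin k → ℝ) := {v | ∑ i, |v i| = 1} with hS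
  have hFc : Continuous F := by
    refine continuous_finset_sum _ fun i _ => continuous_finset_sum _ fun j _ => ?_
    by_cases h : i = j
    · simp only [h, ne_eq, not_true_eq_false, if_false]; exact continuous_const
    · simp only [if_pos (show i ≠ j from h)]
      exact ((continuous_abs_rpow θ hθ).comp (continuous_apply i)).mul
        ((continuous_abs_rpow θ hθ).comp (continuous_apply j))
  have hsumc : Continuous (fun v : Fin k → ℝ => ∑ i, |v i|) :=
    continuous_finset_sum _ fun i _ => continuous_abs.comp (continuous_apply i)
  have hSc : IsClosed S := by
    have : S = (fun v : Fin k → ℝ => ∑ i, |v i|) ⁻¹' {1} := rfl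
    rw [this]; exact isClosed_singleton.preimage hsumc
  have hSb : Bornology.IsBounded S := by
    refine (Metric.isBounded_iff_subset_closedBall 0).mpr ⟨1, fun v hv => ?_⟩
    rw [Metric.mem_closedBall, dist_zero_right]
    refine (pi_norm_le_iff_of_nonneg zero_le_one).mpr fun i => ?_
    rw [Real.norm_eq_abs]
    calc |v i| ≤ ∑ j, |v j| :=
          Finset.single_le_sum (f := fun j => |v j|) (fun j _ => abs_nonneg _) (Finset.mem_univ i)
    _ = 1 := hv
  have hSne : S.Nonempty := by
    refine ⟨fun i => if i = ⟨0, hk⟩ then 1 else 0, ?_⟩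
    simp only [hS, Set.mem_setOf_eq, apply_ite abs, abs_one, abs_zero]
    rw [Finset.sum_ite_eq' univ (⟨0, hk⟩ : Fin k) (fun _ => (1:ℝ))]
    simp
  obtain ⟨v, hv, hvmax⟩ :=
    (Metric.isCompact_of_isClosed_isBounded hSc hSb).exists_isMaxOn hSne hFc.continuousOn
  refine ⟨v, hv, fun w hw => hvmax hw, ?_⟩
  have : Nonempty {v : Fin k → ℝ // ∑ i, |v i| = 1} := ⟨⟨v, hv⟩⟩
  have h1 : phiVar θ k ≤ F v :=
    ciSup_le (fun w : {v : Fin k → ℝ // ∑ i, |v i| = 1} => hvmax w.2)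
  have h2 : F v ≤ phiVar θ k := by
    refine le_ciSup (f := fun w : {v : Fin k → ℝ // ∑ i, |v i| = 1} => F w.1)
      ⟨F v, ?_⟩ (⟨v, hv⟩ : {v : Fin k → ℝ // ∑ i, |v i| = 1})
    rintro _ ⟨w, rfl⟩; exact hvmax w.2
  exact le_antisymm h2 h1


lemma g_deriv (θ A : ℝ) (hθ : 1 < θ) {x : ℝ} (hx : 0 < x) :
    HasDerivAt (fun x : ℝ => A * x ^ (θ-1) - x ^ (θ*2-1))
      (x ^ (θ-2) * (A * (θ-1) - (θ*2-1) * x ^ θ)) x := by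
  have h1 : HasDerivAt (fun x : ℝ => x ^ (θ-1)) ((θ-1) * x ^ (θ-1-1)) x :=
    Real.hasDerivAt_rpow_const (Or.inl hx.ne')
  have h2 : HasDerivAt (fun x : ℝ => x ^ (θ*2-1)) ((θ*2-1) * x ^ (θ*2-1-1)) x :=
    Real.hasDerivAt_rpow_const (Or.inl hx.ne')
  have := (h1.const_mul A).sub h2
  refine this.congr_deriv ?_
  have e1 : θ - 1 - 1 = θ - 2 := by ring
  have e2 : θ * 2 - 1 - 1 = (θ - 2) + θ := by ring
  rw [e1, e2, Real.rpow_add hx]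
  ring

lemma g_no_three (θ A : ℝ) (hθ : 1 < θ) (hA : 0 < A) {a b c : ℝ}
    (ha : 0 < a) (hab : a < b) (hbc : b < c)
    (g1 : A * a ^ (θ-1) - a ^ (θ*2-1) = A * b ^ (θ-1) - b ^ (θ*2-1))
    (g2 : A * b ^ (θ-1) - b ^ (θ*2-1) = A * c ^ (θ-1) - c ^ (θ*2-1)) : False := by
  set g : ℝ → ℝ := fun x => A * x ^ (θ-1) - x ^ (θ*2-1) with hg
  have hθ0 : (0:ℝ) < θ := by linarith
  set K : ℝ := A * (θ-1) / (θ*2-1) with hK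
  have hK0 : 0 < K := by
    apply div_pos (by nlinarith) (by linarith)
  set m : ℝ := K ^ θ⁻¹ with hm
  have hm0 : 0 < m := Real.rpow_pos_of_pos hK0 _
  have hmθ : m ^ θ = K := Real.rpow_inv_rpow hK0.le (by positivity)
  have hgc : Continuous g := by
    have : ∀ q : ℝ, 0 ≤ q → Continuous (fun x : ℝ => x ^ q) := by
      intro q hq
      exact continuous_iff_continuousAt.mpr fun x =>
        Real.continuousAt_rpow_const _ _ (Or.inr hq)
    exact (continuous_const.mul (this _ (by linarith))).sub (this _ (by linarith))
  have hmono : StrictMonoOn g (Icc 0 m) := by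
    refine strictMonoOn_of_deriv_pos (convex_Icc 0 m) hgc.continuousOn fun x hx => ?_
    rw [interior_Icc] at hx
    rw [(g_deriv θ A hθ hx.1).deriv]
    have hxθ : x ^ θ < K := by
      rw [← hmθ]
      exact Real.rpow_lt_rpow hx.1.le hx.2 hθ0
    have : (θ*2-1) * x ^ θ < A * (θ-1) := by
      rw [hK] at hxθ
      calc (θ*2-1) * x ^ θ < (θ*2-1) * (A * (θ-1) / (θ*2-1)) := by
            apply mul_lt_mul_of_pos_left hxθ (by linarith)
      _ = A * (θ-1) := by
            rw [mul_div_assoc']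
            exact mul_div_cancel_left₀ _ (by linarith)
    have hp : 0 < x ^ (θ-2) := Real.rpow_pos_of_pos hx.1 _
    nlinarith
  have hanti : StrictAntiOn g (Ici m) := by
    refine strictAntiOn_of_deriv_neg (convex_Ici m) hgc.continuousOn fun x hx => ?_
    rw [interior_Ici] at hx
    have hx0 : 0 < x := lt_trans hm0 hx
    rw [(g_deriv θ A hθ hx0).deriv]
    have hxθ : K < x ^ θ := by
      rw [← hmθ]
      exact Real.rpow_lt_rpow hm0.le hx hθ0
    have : A * (θ-1) < (θ*2-1) * x ^ θ := by
      rw [hK] at hxθ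
      calc A * (θ-1) = (θ*2-1) * (A * (θ-1) / (θ*2-1)) := by
            rw [mul_div_assoc']
            exact (mul_div_cancel_left₀ _ (by linarith)).symm
      _ < (θ*2-1) * x ^ θ := by apply mul_lt_mul_of_pos_left hxθ (by linarith)
    have hp : 0 < x ^ (θ-2) := Real.rpow_pos_of_pos hx0 _
    nlinarith
  by_cases hbm : b ≤ m
  · have : g a < g b := hmono ⟨ha.le, by linarith⟩ ⟨by linarith, hbm⟩ hab
    rw [hg] at this; simp only at this; linarith
  · push_neg at hbm
    have : g c < g b := hanti (show b ∈ Ici m from hbm.le) (show c ∈ Ici m by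
      exact le_of_lt (lt_trans hbm hbc)) hbc
    rw [hg] at this; simp only at this; linarith


lemma crit {k : ℕ} (θ : ℝ) (hθ : 1 < θ) (t : Fin k → ℝ)
    (ht0 : ∀ l, 0 ≤ t l) (hts : ∑ l, t l = 1)
    (hmax : ∀ w : Fin k → ℝ, (∑ l, |w l| = 1) →
      (∑ l, |w l| ^ θ)^2 - ∑ l, |w l| ^ (θ*2)
        ≤ (∑ l, t l ^ θ)^2 - ∑ l, t l ^ (θ*2))
    (i j : Fin k) (hij : i ≠ j) (hti : 0 < t i) (htj : 0 < t j) :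
    (∑ l, t l ^ θ) * (t i) ^ (θ-1) - (t i) ^ (θ*2-1)
      = (∑ l, t l ^ θ) * (t j) ^ (θ-1) - (t j) ^ (θ*2-1) := by
  classical
  have hθ0 : (0:ℝ) < θ := by linarith
  set p := t i with hp
  set q := t j with hq
  set s := p + q with hs
  set A := ∑ l, t l ^ θ with hA
  set B := ∑ l, t l ^ (θ*2) with hB
  set CA := A - p ^ θ - q ^ θ with hCA
  set CB := B - p ^ (θ*2) - q ^ (θ*2) with hCB
  set u : ℝ → Fin k → ℝ :=
    fun τ => Function.update (Function.update t i τ) j (s - τ) with hu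
  set h : ℝ → ℝ := fun τ =>
    (τ ^ θ + (s - τ) ^ θ + CA)^2 - (τ ^ (θ*2) + (s - τ) ^ (θ*2) + CB) with hh
  have habs : ∀ l, |t l| = t l := fun l => abs_of_nonneg (ht0 l)
  have habsθ : ∀ (e : ℝ), ∑ l, |t l| ^ e = ∑ l, t l ^ e :=
    fun e => Finset.sum_congr rfl fun l _ => by rw [habs l]
  -- step 1 : h τ ≤ h p on Icc 0 s
  have step1 : ∀ τ ∈ Icc 0 s, h τ ≤ h p := by
    intro τ hτ
    obtain ⟨hτ0, hτs⟩ := hτ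
    have hsτ : 0 ≤ s - τ := by linarith
    have key : ∀ e : ℝ, ∑ l, |u τ l| ^ e
        = τ ^ e + (s - τ) ^ e + ((∑ l, t l ^ e) - p ^ e - q ^ e) := by
      intro e
      have := sum_update_two t i j hij τ (s - τ) (fun r => |r| ^ e)
      rw [hu]
      simp only at this ⊢
      rw [this, abs_of_nonneg hτ0, abs_of_nonneg hsτ, habs i, habs j, habsθ e]
    have hsum1 : ∑ l, |u τ l| = 1 := by
      have := sum_update_two t i j hij τ (s - τ) (fun r => |r|)
      rw [hu]; simp only at this ⊢
      rw [this, abs_of_nonneg hτ0, abs_of_nonneg hsτ, habs i, habs j,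
        Finset.sum_congr rfl fun l _ => habs l, hts]
      rw [hs]; ring
    have hfab : (∑ l, |u τ l| ^ θ)^2 - ∑ l, |u τ l| ^ (θ*2) = h τ := by
      rw [key θ, key (θ*2), hh]
    have hhp : h p = A^2 - B := by
      have h1 : s - p = q := by rw [hs]; ring
      simp only [hh]
      rw [h1, hCA, hCB]; ring
    calc h τ = (∑ l, |u τ l| ^ θ)^2 - ∑ l, |u τ l| ^ (θ*2) := hfab.symm
    _ ≤ A^2 - B := hmax _ hsum1
    _ = h p := hhp.symm
  -- step 2 : local max
  have hps : p < s := by rw [hs]; linarith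
  have hloc : IsLocalMax h p := by
    have hmem : Icc 0 s ∈ nhds p := Icc_mem_nhds hti hps
    exact Filter.eventually_of_mem hmem (fun τ hτ => step1 τ hτ)
  -- step 3 : derivative
  have hsp : s - p = q := by rw [hs]; ring
  have hd1 : HasDerivAt (fun τ : ℝ => τ ^ θ) (θ * p ^ (θ-1)) p :=
    Real.hasDerivAt_rpow_const (Or.inl hti.ne')
  have hd1' : HasDerivAt (fun τ : ℝ => τ ^ (θ*2)) (θ*2 * p ^ (θ*2-1)) p :=
    Real.hasDerivAt_rpow_const (Or.inl hti.ne')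
  have hg1 : HasDerivAt (fun x : ℝ => x ^ θ) (θ * q ^ (θ-1)) (s - p) := by
    rw [hsp]; exact Real.hasDerivAt_rpow_const (Or.inl htj.ne')
  have hg2 : HasDerivAt (fun x : ℝ => x ^ (θ*2)) (θ*2 * q ^ (θ*2-1)) (s - p) := by
    rw [hsp]; exact Real.hasDerivAt_rpow_const (Or.inl htj.ne')
  have hinner : HasDerivAt (fun τ : ℝ => s - τ) (-1) p := (hasDerivAt_id p).const_sub s
  have hd2 : HasDerivAt (fun τ : ℝ => (s - τ) ^ θ) (θ * q ^ (θ-1) * (-1)) p :=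
    hg1.comp p hinner
  have hd2' : HasDerivAt (fun τ : ℝ => (s - τ) ^ (θ*2)) (θ*2 * q ^ (θ*2-1) * (-1)) p :=
    hg2.comp p hinner
  have hE : HasDerivAt (fun τ : ℝ => τ ^ θ + (s - τ) ^ θ + CA)
      (θ * p ^ (θ-1) + θ * q ^ (θ-1) * (-1)) p := (hd1.add hd2).add_const CA
  have hE2 := hE.pow 2
  have hBd : HasDerivAt (fun τ : ℝ => τ ^ (θ*2) + (s - τ) ^ (θ*2) + CB)
      (θ*2 * p ^ (θ*2-1) + θ*2 * q ^ (θ*2-1) * (-1)) p := (hd1'.add hd2').add_const CB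
  have hhd := hE2.sub hBd
  have hD0 := hloc.hasDerivAt_eq_zero hhd
  -- step 4 : conclude
  have hEp : p ^ θ + (s - p) ^ θ + CA = A := by rw [hsp, hCA]; ring
  rw [hEp] at hD0
  have key : 2 * θ * ((A * p ^ (θ-1) - p ^ (θ*2-1)) - (A * q ^ (θ-1) - q ^ (θ*2-1))) = 0 := by
    push_cast at hD0
    linear_combination hD0
  have h2θ : (2:ℝ) * θ ≠ 0 := by positivity
  have := mul_eq_zero.mp key
  rcases this with h' | h'
  · exact absurd h' h2θ
  · linarith


lemma struct_sum {k k₁ k₂ : ℕ} (hkk : k₁ + k₂ ≤ k) (x y : ℝ)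
    (f : ℝ → ℝ) (hf0 : f 0 = 0) :
    ∑ i : Fin k, f (if (i : ℕ) < k₁ then x else if (i : ℕ) < k₁ + k₂ then y else 0)
      = k₁ * f x + k₂ * f y := by
  rw [Fin.sum_univ_eq_sum_range
    (fun n => f (if n < k₁ then x else if n < k₁ + k₂ then y else 0)) k]
  rw [Finset.range_eq_Ico,
    ← Finset.sum_Ico_consecutive _ (Nat.zero_le (k₁ + k₂)) hkk,
    ← Finset.sum_Ico_consecutive _ (Nat.zero_le k₁) (Nat.le_add_right k₁ k₂)]
  have c1 : ∑ n ∈ Finset.Ico 0 k₁,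
      f (if n < k₁ then x else if n < k₁ + k₂ then y else 0) = k₁ * f x := by
    have e : ∀ n ∈ Finset.Ico 0 k₁,
        f (if n < k₁ then x else if n < k₁ + k₂ then y else 0) = f x := fun n hn => by
      rw [if_pos (Finset.mem_Ico.mp hn).2]
    rw [Finset.sum_congr rfl e, Finset.sum_const, Nat.card_Ico, nsmul_eq_mul]
    norm_num
  have c2 : ∑ n ∈ Finset.Ico k₁ (k₁ + k₂),
      f (if n < k₁ then x else if n < k₁ + k₂ then y else 0) = k₂ * f y := by
    have e : ∀ n ∈ Finset.Ico k₁ (k₁ + k₂),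
        f (if n < k₁ then x else if n < k₁ + k₂ then y else 0) = f y := fun n hn => by
      obtain ⟨h1, h2⟩ := Finset.mem_Ico.mp hn
      rw [if_neg (by omega), if_pos h2]
    rw [Finset.sum_congr rfl e, Finset.sum_const, Nat.card_Ico, nsmul_eq_mul]
    norm_num
  have c3 : ∑ n ∈ Finset.Ico (k₁ + k₂) k,
      f (if n < k₁ then x else if n < k₁ + k₂ then y else 0) = 0 := by
    have e : ∀ n ∈ Finset.Ico (k₁ + k₂) k,
        f (if n < k₁ then x else if n < k₁ + k₂ then y else 0) = 0 := fun n hn => by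
      obtain ⟨h1, h2⟩ := Finset.mem_Ico.mp hn
      rw [if_neg (by omega), if_neg (by omega)]
      exact hf0
    rw [Finset.sum_congr rfl e, Finset.sum_const, smul_zero]
  rw [c1, c2, c3]; ring

lemma moment_sum {k : ℕ} (t : Fin k → ℝ) (x y : ℝ) (hxy : x ≠ y)
    (hval : ∀ i, t i ≠ 0 → t i = x ∨ t i = y)
    (f : ℝ → ℝ) (hf0 : f 0 = 0) :
    ∑ i, f (t i)
      = ((univ.filter fun i => t i = x).card : ℝ) * f x
        + ((univ.filter fun i => t i = y).card : ℝ) * f y := by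
  classical
  rw [← Finset.sum_filter_add_sum_filter_not univ (fun i => t i = x) (fun i => f (t i))]
  have c1 : ∑ i ∈ univ.filter (fun i => t i = x), f (t i)
      = ((univ.filter fun i => t i = x).card : ℝ) * f x := by
    rw [Finset.sum_congr rfl (fun i hi => by rw [(Finset.mem_filter.mp hi).2]),
      Finset.sum_const, nsmul_eq_mul]
  rw [c1]
  congr 1
  rw [← Finset.sum_filter_add_sum_filter_not (univ.filter fun i => ¬ t i = x)
    (fun i => t i = y) (fun i => f (t i))]
  have c2 : (univ.filter fun i => ¬ t i = x).filter (fun i => t i = y)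
      = univ.filter fun i => t i = y := by
    ext i
    simp only [Finset.mem_filter, Finset.mem_univ, true_and, and_iff_right_iff_imp]
    intro h hx'
    exact hxy (hx'.symm.trans h)
  have c3 : ∑ i ∈ ((univ.filter fun i => ¬ t i = x).filter fun i => ¬ t i = y),
      f (t i) = 0 := by
    rw [Finset.sum_congr rfl (fun i hi => ?_), Finset.sum_const, smul_zero]
    obtain ⟨hi1, hi2⟩ := Finset.mem_filter.mp hi
    obtain ⟨_, hi3⟩ := Finset.mem_filter.mp hi1
    have ht : t i = 0 := by
      by_contra h'
      rcases hval i h' with h'' | h''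
      · exact hi3 h''
      · exact hi2 h''
    rw [ht, hf0]
  rw [c2, c3,
    Finset.sum_congr rfl (fun i hi => by rw [(Finset.mem_filter.mp hi).2]),
    Finset.sum_const, nsmul_eq_mul]
  ring


lemma g_no_three' (θ A : ℝ) (hθ : 1 < θ) (hA : 0 < A) {a b c : ℝ}
    (ha : 0 < a) (hb : 0 < b) (hc : 0 < c)
    (hab : a ≠ b) (hac : a ≠ c) (hbc : b ≠ c)
    (g1 : A * a ^ (θ-1) - a ^ (θ*2-1) = A * b ^ (θ-1) - b ^ (θ*2-1))
    (g2 : A * b ^ (θ-1) - b ^ (θ*2-1) = A * c ^ (θ-1) - c ^ (θ*2-1)) : False := by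
  rcases lt_trichotomy a b with h1 | h1 | h1
  · rcases lt_trichotomy b c with h2 | h2 | h2
    · exact g_no_three θ A hθ hA ha h1 h2 g1 g2
    · exact hbc h2
    · rcases lt_trichotomy a c with h3 | h3 | h3
      · exact g_no_three θ A hθ hA ha h3 h2 (g1.trans g2) g2.symm
      · exact hac h3
      · exact g_no_three θ A hθ hA hc h3 h1 (g1.trans g2).symm g1
  · exact hab h1
  · rcases lt_trichotomy a c with h3 | h3 | h3
    · exact g_no_three θ A hθ hA hb h1 h3 g1.symm (g1.trans g2)
    · exact hac h3
    · rcases lt_trichotomy b c with h2 | h2 | h2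
      · exact g_no_three θ A hθ hA hb h2 h3 g2 (g2.symm.trans g1.symm)
      · exact hbc h2
      · exact g_no_three θ A hθ hA hc h2 h1 g2.symm g1.symm

theorem phiVar_attained_two_values (θ : ℝ) (hθ : 1 < θ) (k : ℕ) (hk : 2 ≤ k) :
    ∃ (k₁ k₂ : ℕ) (x y : ℝ), k₁ + k₂ ≤ k ∧ 0 ≤ x ∧ 0 ≤ y ∧
      (k₁ : ℝ) * x + (k₂ : ℝ) * y = 1 ∧
      (∑ i : Fin k, ∑ j : Fin k,
          if i ≠ j then
            |(if (i : ℕ) < k₁ then x else if (i : ℕ) < k₁ + k₂ then y else 0)| ^ θ *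
              |(if (j : ℕ) < k₁ then x else if (j : ℕ) < k₁ + k₂ then y else 0)| ^ θ
          else 0) = phiVar θ k := by
  classical
  have hθ0 : (0:ℝ) < θ := by linarith
  obtain ⟨v, hv1, hvmax, hvphi⟩ := exists_max θ hθ0 k (by omega)
  set t : Fin k → ℝ := fun i => |v i| with htdef
  have ht0 : ∀ i, 0 ≤ t i := fun i => abs_nonneg _
  have hts : ∑ i, t i = 1 := hv1
  have habs : ∀ i, |t i| = t i := fun i => abs_of_nonneg (ht0 i)
  -- maximality in the algebraic form
  have hmax : ∀ w : Fin k → ℝ, (∑ l, |w l| = 1) →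
      (∑ l, |w l| ^ θ)^2 - ∑ l, |w l| ^ (θ*2)
        ≤ (∑ l, t l ^ θ)^2 - ∑ l, t l ^ (θ*2) := by
    intro w hw
    have := hvmax w hw
    rw [F_eq θ w, F_eq θ v] at this
    exact this
  set A := ∑ l, t l ^ θ with hA
  have hA0 : 0 < A := by
    obtain ⟨i, hi⟩ : ∃ i, t i ≠ 0 := by
      by_contra hcon
      push_neg at hcon
      rw [Finset.sum_congr rfl fun i _ => hcon i] at hts
      simp at hts
    have hi' : 0 < t i := lt_of_le_of_ne (ht0 i) (Ne.symm hi)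
    calc (0:ℝ) < t i ^ θ := Real.rpow_pos_of_pos hi' θ
    _ ≤ A := Finset.single_le_sum (f := fun l => t l ^ θ)
        (fun l _ => Real.rpow_nonneg (ht0 l) θ) (Finset.mem_univ i)
  -- all positive coordinates share g-value
  have hcrit : ∀ i j : Fin k, i ≠ j → 0 < t i → 0 < t j →
      A * (t i) ^ (θ-1) - (t i) ^ (θ*2-1) = A * (t j) ^ (θ-1) - (t j) ^ (θ*2-1) := by
    intro i j hij hi hj
    have := crit θ hθ t ht0 hts hmax i j hij hi hj
    rw [← hA] at this
    linarith [this]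
  -- find the at most two values x, y
  obtain ⟨i₀, hi₀⟩ : ∃ i, t i ≠ 0 := by
    by_contra hcon
    push_neg at hcon
    rw [Finset.sum_congr rfl fun i _ => hcon i] at hts
    simp at hts
  have hvals : ∃ x y : ℝ, x ≠ y ∧ 0 ≤ x ∧ 0 ≤ y ∧
      (∀ i, t i ≠ 0 → t i = x ∨ t i = y) := by
    by_cases hone : ∀ i, t i ≠ 0 → t i = t i₀
    · exact ⟨t i₀, 0, hi₀, ht0 i₀, le_refl 0, fun i hi => Or.inl (hone i hi)⟩
    · push_neg at hone
      obtain ⟨j₀, hj₀ne, hj₀⟩ := hone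
      refine ⟨t i₀, t j₀, fun h => hj₀ h.symm, ht0 i₀, ht0 j₀, fun i hi => ?_⟩
      by_contra hcon
      push_neg at hcon
      obtain ⟨hix, hiy⟩ := hcon
      have hpi : 0 < t i := lt_of_le_of_ne (ht0 i) (Ne.symm hi)
      have hpi₀ : 0 < t i₀ := lt_of_le_of_ne (ht0 i₀) (Ne.symm hi₀)
      have hpj₀ : 0 < t j₀ := lt_of_le_of_ne (ht0 j₀) (Ne.symm hj₀ne)
      have hii₀ : i ≠ i₀ := fun h => hix (h ▸ rfl)
      have hij₀ : i ≠ j₀ := fun h => hiy (h ▸ rfl)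
      have hi₀j₀ : i₀ ≠ j₀ := fun h => hj₀ (congrArg t h).symm
      exact g_no_three' θ A hθ hA0 hpi hpi₀ hpj₀ hix hiy hj₀.symm
        (hcrit i i₀ hii₀ hpi hpi₀) (hcrit i₀ j₀ hi₀j₀ hpi₀ hpj₀)
  obtain ⟨x, y, hxy, hx0, hy0, hval⟩ := hvals
  set k₁ := (univ.filter fun i => t i = x).card with hk₁
  set k₂ := (univ.filter fun i => t i = y).card with hk₂
  have hdisj : Disjoint (univ.filter fun i => t i = x) (univ.filter fun i => t i = y) := by
    rw [Finset.disjoint_left]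
    intro i hi1 hi2
    exact hxy ((Finset.mem_filter.mp hi1).2.symm.trans (Finset.mem_filter.mp hi2).2)
  have hkk : k₁ + k₂ ≤ k := by
    rw [hk₁, hk₂, ← Finset.card_union_of_disjoint hdisj]
    calc _ ≤ (univ : Finset (Fin k)).card := Finset.card_le_univ _
    _ = k := by simp
  have hconstraint : (k₁ : ℝ) * x + (k₂ : ℝ) * y = 1 := by
    have := moment_sum t x y hxy hval id rfl
    simp only [id] at this
    rw [hts] at this
    rw [← this]
  refine ⟨k₁, k₂, x, y, hkk, hx0, hy0, hconstraint, ?_⟩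
  -- both sides via the algebraic identity
  set w : Fin k → ℝ := fun i =>
    if (i : ℕ) < k₁ then x else if (i : ℕ) < k₁ + k₂ then y else 0 with hw
  have hzθ : ∀ e : ℝ, e ≠ 0 → |(0:ℝ)| ^ e = 0 := by
    intro e he; rw [abs_zero, Real.zero_rpow he]
  have hsw : ∀ e : ℝ, e ≠ 0 → ∑ l, |w l| ^ e = k₁ * |x| ^ e + k₂ * |y| ^ e := by
    intro e he
    exact struct_sum hkk x y (fun r => |r| ^ e) (hzθ e he)
  have hst : ∀ e : ℝ, e ≠ 0 → ∑ l, |v l| ^ e = k₁ * |x| ^ e + k₂ * |y| ^ e := by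
    intro e he
    have := moment_sum t x y hxy hval (fun r => |r| ^ e) (hzθ e he)
    have e2 : ∀ l, |t l| ^ e = |v l| ^ e := fun l => by rw [habs l]
    rw [Finset.sum_congr rfl fun l _ => e2 l] at this
    exact this
  rw [F_eq θ w]
  rw [← hvphi, F_eq θ v]
  rw [hsw θ (by positivity), hsw (θ*2) (by positivity),
    hst θ (by positivity), hst (θ*2) (by positivity)]
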